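/- Fix reals m < M and v ∈ [0,1], and set λ = min{v, 1-v}, μ = max{v, 1-v}. For p > 0 define L(p) = ((e^{pm} ∇_λ e^{pM})·(e^{pm} ♯_μ e^{pM})) / ((e^{pm} ♯_λ e^{pM})·(e^{pm} !_μ e^{pM})), where x ∇_w y = (1-w)x + wy, x ♯_w y = x^{1-w}y^w, and x !_w y = ((1-w)/x + w/y)^{-1} for positive x, y. Then lim_{p→0⁺} L(p)^{1/p} = 1. -/

import Mathlib

open Real Filter

theorem limit_L_pow_one_div_p (m M v : ℝ) (hmM : m < M) (hv0 : 0 ≤ v) (hv1 : v ≤ 1) :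
    Tendsto
      (fun p : ℝ =>
        ((((1 - min v (1 - v)) * exp (p * m) + min v (1 - v) * exp (p * M)) *
            (exp (p * m) ^ (1 - max v (1 - v)) * exp (p * M) ^ (max v (1 - v)))) /
          ((exp (p * m) ^ (1 - min v (1 - v)) * exp (p * M) ^ (min v (1 - v))) *
            ((1 - max v (1 - v)) / exp (p * m) + max v (1 - v) / exp (p * M))⁻¹)) ^ (1 / p))
      (nhdsWithin 0 (Set.Ioi 0)) (nhds 1) := by
  set l := min v (1 - v) with hldef
  set u := max v (1 - v) with hudef
  have hl0 : 0 ≤ l := le_min hv0 (by linarith)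
  have hlu : l + u = 1 := by
    rcases le_total v (1 - v) with h | h
    · rw [hldef, hudef, min_eq_left h, max_eq_right h]; ring
    · rw [hldef, hudef, min_eq_right h, max_eq_left h]; ring
  have hu1 : u ≤ 1 := max_le hv1 (by linarith)
  have hlequ : l ≤ u := min_le_max
  have h1l : 0 < 1 - l := by linarith
  have hu0 : 0 < u := by linarith
  have h1u : 0 ≤ 1 - u := by linarith
  set A : ℝ → ℝ := fun p => (1 - l) * exp (p * m) + l * exp (p * M) with hAdef
  set B : ℝ → ℝ := fun p => (1 - u) * exp (-(p * m)) + u * exp (-(p * M)) with hBdef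
  have hApos : ∀ p, 0 < A p := fun p =>
    add_pos_of_pos_of_nonneg (mul_pos h1l (exp_pos _)) (mul_nonneg hl0 (exp_pos _).le)
  have hBpos : ∀ p, 0 < B p := fun p =>
    add_pos_of_nonneg_of_pos (mul_nonneg h1u (exp_pos _).le) (mul_pos hu0 (exp_pos _))
  set g : ℝ → ℝ := fun p => Real.log (A p) + p * ((u - l) * (M - m)) + Real.log (B p) with hgdef
  have hA0 : A 0 = 1 := by simp [hAdef]
  have hB0 : B 0 = 1 := by simp [hBdef]
  have hg0 : g 0 = 0 := by simp [hgdef, hA0, hB0]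
  -- derivative of g at 0 is 0
  have hm' : HasDerivAt (fun p : ℝ => p * m) m 0 := hasDerivAt_mul_const m
  have hM' : HasDerivAt (fun p : ℝ => p * M) M 0 := hasDerivAt_mul_const M
  have hA' : HasDerivAt A ((1 - l) * m + l * M) 0 := by
    have := ((hm'.exp).const_mul (1 - l)).add ((hM'.exp).const_mul l)
    simpa [hAdef, Pi.add_def] using this
  have hB' : HasDerivAt B (-((1 - u) * m + u * M)) 0 := by
    have h := (((hm'.neg).exp).const_mul (1 - u)).add (((hM'.neg).exp).const_mul u)
    have e : (1 - u) * (Real.exp (-(0 * m)) * -m) + u * (Real.exp (-(0 * M)) * -M) =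
        -((1 - u) * m + u * M) := by
      rw [zero_mul, zero_mul, neg_zero, Real.exp_zero]; ring
    simp only [Pi.add_def, Pi.neg_apply] at h; rw [e] at h; exact h
  have hlogA : HasDerivAt (fun p => Real.log (A p)) ((1 - l) * m + l * M) 0 := by
    have := hA'.log (hApos 0).ne'
    simpa [hA0] using this
  have hlogB : HasDerivAt (fun p => Real.log (B p)) (-((1 - u) * m + u * M)) 0 := by
    have := hB'.log (hBpos 0).ne'
    simpa [hB0] using this
  have hmid : HasDerivAt (fun p : ℝ => p * ((u - l) * (M - m))) ((u - l) * (M - m)) 0 :=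
    hasDerivAt_mul_const _
  have hg' : HasDerivAt g 0 0 := by
    have := (hlogA.add hmid).add hlogB
    simp only [Pi.add_def] at this
    have e : (1 - l) * m + l * M + (u - l) * (M - m) + -((1 - u) * m + u * M) = 0 := by ring
    rw [e] at this; exact this
  have hslope : Tendsto (fun p => g p / p) (nhdsWithin 0 (Set.Ioi 0)) (nhds 0) := by
    have h := hasDerivAt_iff_tendsto_slope.mp hg'
    have h2 : Tendsto (slope g 0) (nhdsWithin 0 (Set.Ioi 0)) (nhds 0) :=
      h.mono_left (nhdsWithin_mono _ fun x hx => ne_of_gt hx)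
    refine h2.congr fun p => ?_
    simp [slope_def_field, hg0]
  have hexp : Tendsto (fun p => exp (g p / p)) (nhdsWithin 0 (Set.Ioi 0)) (nhds 1) := by
    have := (Real.continuous_exp.tendsto 0).comp hslope
    simpa [Function.comp_def] using this
  refine hexp.congr' ?_
  filter_upwards [self_mem_nhdsWithin] with p (hp : 0 < p)
  have hEeq :
      (((1 - l) * exp (p * m) + l * exp (p * M)) *
            (exp (p * m) ^ (1 - u) * exp (p * M) ^ u)) /
          ((exp (p * m) ^ (1 - l) * exp (p * M) ^ l) *
            ((1 - u) / exp (p * m) + u / exp (p * M))⁻¹) =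
        A p * exp (p * ((u - l) * (M - m))) * B p := by
    have hSB : (1 - u) / exp (p * m) + u / exp (p * M) = B p := by
      rw [hBdef]
      simp [div_eq_mul_inv, Real.exp_neg]
    rw [← Real.exp_mul, ← Real.exp_mul, ← Real.exp_mul, ← Real.exp_mul,
      ← Real.exp_add, ← Real.exp_add, hSB, ← div_div, div_inv_eq_mul,
      div_mul_eq_mul_div, mul_div_assoc, div_eq_mul_inv, ← Real.exp_neg, hAdef, hBdef]
    have key : Real.exp (p * m * (1 - u) + p * M * u) *
        Real.exp (-(p * m * (1 - l) + p * M * l)) =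
        Real.exp (p * ((u - l) * (M - m))) := by
      rw [← Real.exp_add]; congr 1; ring
    linear_combination (((1 - l) * Real.exp (p * m) + l * Real.exp (p * M)) *
      ((1 - u) * Real.exp (-(p * m)) + u * Real.exp (-(p * M)))) * key
  have hlogE : Real.log (A p * exp (p * ((u - l) * (M - m))) * B p) = g p := by
    rw [Real.log_mul (by positivity) (hBpos p).ne',
      Real.log_mul (hApos p).ne' (exp_pos _).ne', Real.log_exp, hgdef]
  rw [hEeq, Real.rpow_def_of_pos (by positivity), hlogE]
  rw [mul_one_div]
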